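/- arXiv:1202.0343 — 2 statements merged into one kernel-verified Lean document; each statement's English description precedes it below -/
import Mathlib

section
/- Let w, r be positive integers and n = wr. Let T be the n×n block matrix [T_{i,j}] with 1 ≤ i,j ≤ w, where each block T_{i,j} is r×r, T_{i,j} has all entries independent and uniform over F₂ whenever j ≤ i, and T_{i,j} = 0 whenever i < j. Then for every integer 0 ≤ γ ≤ n−1, Pr[rank(T) < n−γ] ≤ ⌈(n−γ)/r⌉ · (1 − 2^{−r}) · 2^{−γ}. -/
open MeasureTheory ProbabilityTheory

noncomputable instance : MeasurableSpace (ZMod 2) := ⊤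

attribute [local instance] Classical.propDecidable
open Matrix
open scoped ENNReal


open Module Submodule Finset in
lemma span_count_aux' {K V : Type*} [Field K] [AddCommGroup V] [Module K V]
    [FiniteDimensional K V] {n : ℕ} (v : Fin n → V) :
    ∀ k t, n - t = k → t ≤ n →
      finrank K (span K (v '' {s : Fin n | t ≤ s.val})) +
        ((univ : Finset (Fin n)).filter
          (fun s => t ≤ s.val ∧ v s ∈ span K (v '' {u : Fin n | s < u}))).card = n - t := by
  intro k
  induction k with
  | zero =>
    intro t hk ht
    have ht' : t = n := by omega
    have h1 : {s : Fin n | t ≤ s.val} = (∅ : Set (Fin n)) := by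
      ext s; simp only [Set.mem_setOf_eq, Set.mem_empty_iff_false, iff_false, not_le]
      have := s.isLt; omega
    have h2 : ((univ : Finset (Fin n)).filter
        (fun s => t ≤ s.val ∧ v s ∈ span K (v '' {u : Fin n | s < u}))) = ∅ := by
      apply Finset.filter_eq_empty_iff.mpr
      intro s _
      rintro ⟨h1, -⟩
      have := s.isLt; omega
    simp [h1, h2, hk]
  | succ m ih =>
    intro t hk ht
    have htn : t < n := by omega
    set st : Fin n := ⟨t, htn⟩ with hst
    have hstv : (st : ℕ) = t := rfl
    have hIoi : {u : Fin n | st < u} = {s : Fin n | t + 1 ≤ s.val} := by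
      ext u; simp only [Set.mem_setOf_eq, Fin.lt_def, hstv]; omega
    have hins : {s : Fin n | t ≤ s.val} = insert st {s : Fin n | t + 1 ≤ s.val} := by
      ext s
      show t ≤ s.val ↔ s = st ∨ s ∈ {s : Fin n | t + 1 ≤ s.val}
      simp only [Set.mem_setOf_eq]
      constructor
      · intro hs
        rcases eq_or_lt_of_le hs with h | h
        · exact Or.inl (Fin.ext (by omega))
        · exact Or.inr (by omega)
      · rintro (rfl | hs)
        · exact hstv.ge
        · omega
    have himg : v '' {s : Fin n | t ≤ s.val}
        = insert (v st) (v '' {s : Fin n | t + 1 ≤ s.val}) := by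
      rw [hins, Set.image_insert_eq]
    set W := span K (v '' {s : Fin n | t + 1 ≤ s.val}) with hW
    have hspan : span K (v '' {s : Fin n | t ≤ s.val}) = (K ∙ (v st)) ⊔ W := by
      rw [himg, Submodule.span_insert]
    have ihm := ih (t + 1) (by omega) (by omega)
    by_cases hmem : v st ∈ W
    · have hsup : (K ∙ (v st)) ⊔ W = W := by
        rw [sup_eq_right]
        exact (Submodule.span_singleton_le_iff_mem _ _).mpr hmem
      have hfil : ((univ : Finset (Fin n)).filter
            (fun s => t ≤ s.val ∧ v s ∈ span K (v '' {u : Fin n | s < u})))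
          = insert st ((univ : Finset (Fin n)).filter
            (fun s => t + 1 ≤ s.val ∧ v s ∈ span K (v '' {u : Fin n | s < u}))) := by
        ext s
        simp only [Finset.mem_filter, Finset.mem_insert, Finset.mem_univ, true_and]
        constructor
        · rintro ⟨h1, h2⟩
          rcases eq_or_lt_of_le h1 with h | h
          · left; exact (Fin.ext h.symm)
          · right; exact ⟨h, h2⟩
        · rintro (rfl | ⟨h1, h2⟩)
          · exact ⟨le_refl _, by rw [hIoi]; exact hmem⟩
          · exact ⟨by omega, h2⟩
      rw [hspan, hsup, hfil, Finset.card_insert_of_notMem (by simp [hstv])]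
      rw [← hW] at ihm
      omega
    · have hvne : v st ≠ 0 := fun h => hmem (h ▸ W.zero_mem)
      have hinf : (K ∙ (v st)) ⊓ W = ⊥ := by
        rw [eq_bot_iff]
        rintro x ⟨hx1, hx2⟩
        obtain ⟨c, rfl⟩ := Submodule.mem_span_singleton.mp hx1
        rcases eq_or_ne c 0 with rfl | hc
        · simp
        · exact absurd (by simpa [smul_smul, inv_mul_cancel₀ hc] using W.smul_mem c⁻¹ hx2) hmem
      have hrk := Submodule.finrank_sup_add_finrank_inf_eq (K ∙ (v st)) W
      rw [hinf, finrank_bot, finrank_span_singleton hvne, add_zero] at hrk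
      have hfil : ((univ : Finset (Fin n)).filter
            (fun s => t ≤ s.val ∧ v s ∈ span K (v '' {u : Fin n | s < u})))
          = ((univ : Finset (Fin n)).filter
            (fun s => t + 1 ≤ s.val ∧ v s ∈ span K (v '' {u : Fin n | s < u}))) := by
        ext s
        simp only [Finset.mem_filter, Finset.mem_univ, true_and]
        constructor
        · rintro ⟨h1, h2⟩
          rcases eq_or_lt_of_le h1 with h | h
          · exfalso
            have : s = st := Fin.ext h.symm
            subst this
            rw [hIoi] at h2
            exact hmem h2
          · exact ⟨h, h2⟩
        · rintro ⟨h1, h2⟩; exact ⟨by omega, h2⟩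
      rw [hspan, hrk, hfil]
      rw [← hW] at ihm
      omega

lemma exists_nth_from_top {α : Type*} [LinearOrder α] :
    ∀ (γ : ℕ) (F : Finset α), γ < F.card →
      ∃ t ∈ F, (F.filter (fun s => t < s)).card = γ := by
  intro γ
  induction γ with
  | zero =>
    intro F hF
    have hne : F.Nonempty := Finset.card_pos.mp hF
    refine ⟨F.max' hne, F.max'_mem hne, ?_⟩
    rw [Finset.filter_eq_empty_iff.mpr fun s hs => not_lt.mpr (F.le_max' s hs)]
    exact Finset.card_empty
  | succ m ih =>
    intro F hF
    have hne : F.Nonempty := Finset.card_pos.mp (by omega)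
    set M := F.max' hne with hM
    obtain ⟨t, ht, hcard⟩ := ih (F.erase M)
      (by rw [Finset.card_erase_of_mem (F.max'_mem hne)]; omega)
    have htF : t ∈ F := Finset.mem_of_mem_erase ht
    have htM : t < M :=
      lt_of_le_of_ne (F.le_max' t htF) (Finset.ne_of_mem_erase ht)
    refine ⟨t, htF, ?_⟩
    have hins : F.filter (fun s => t < s) = insert M ((F.erase M).filter (fun s => t < s)) := by
      ext s
      simp only [Finset.mem_filter, Finset.mem_insert, Finset.mem_erase]
      constructor
      · rintro ⟨hsF, hts⟩
        rcases eq_or_ne s M with rfl | hsM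
        · exact Or.inl rfl
        · exact Or.inr ⟨⟨hsM, hsF⟩, hts⟩
      · rintro (rfl | ⟨⟨hsM, hsF⟩, hts⟩)
        · exact ⟨F.max'_mem hne, htM⟩
        · exact ⟨hsF, hts⟩
    rw [hins, Finset.card_insert_of_notMem
      (fun h => (Finset.mem_erase.mp (Finset.mem_filter.mp h).1).1 rfl), hcard]

lemma geom_sum_partial : ∀ L : ℕ,
    (∑ t ∈ Finset.range L, (2:ℝ) ^ (-(t : ℤ) - 1)) = 1 - 2 ^ (-(L : ℤ)) := by
  intro L
  induction L with
  | zero => simp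
  | succ m ih =>
    rw [Finset.sum_range_succ, ih]
    have h2 : (2:ℝ) ^ (-(m:ℤ) - 1) = 2 ^ (-(m:ℤ)) / 2 := by
      rw [zpow_sub₀ (by norm_num : (2:ℝ) ≠ 0), zpow_one]
    have h3 : (-(↑(m+1) : ℤ)) = (-(m:ℤ) - 1) := by push_cast; ring
    rw [h3, h2]
    ring

lemma two_zpow_le_one {k : ℕ} : (2:ℝ) ^ (-(k:ℤ)) ≤ 1 := by
  rw [show (1:ℝ) = 2 ^ (0:ℤ) by norm_num]
  exact zpow_le_zpow_right₀ one_le_two (by omega)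

lemma geom_block_sum {r : ℕ} (hr : 0 < r) : ∀ L : ℕ,
    (∑ t ∈ Finset.range L, (2:ℝ) ^ (-((t % r : ℕ) : ℤ) - 1))
      ≤ (((L + r - 1) / r : ℕ) : ℝ) * (1 - 2 ^ (-(r:ℤ))) := by
  intro L
  induction L using Nat.strong_induction_on with
  | _ L ih =>
    rcases Nat.eq_zero_or_pos L with rfl | hL
    · rw [Finset.range_zero, Finset.sum_empty]
      exact mul_nonneg (Nat.cast_nonneg _) (by linarith [two_zpow_le_one (k := r)])
    rcases le_or_gt L r with hLr | hrL
    · have hsum : (∑ t ∈ Finset.range L, (2:ℝ) ^ (-((t % r : ℕ) : ℤ) - 1))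
          = 1 - 2 ^ (-(L:ℤ)) := by
        rw [← geom_sum_partial L]
        apply Finset.sum_congr rfl
        intro t ht
        rw [Nat.mod_eq_of_lt (by have := Finset.mem_range.mp ht; omega)]
      have hceil : (L + r - 1) / r = 1 := by
        apply Nat.div_eq_of_lt_le <;> omega
      rw [hsum, hceil]
      have : (2:ℝ) ^ (-(r:ℤ)) ≤ 2 ^ (-(L:ℤ)) :=
        zpow_le_zpow_right₀ one_le_two (by omega)
      push_cast
      linarith
    · have hsplit := Finset.sum_range_add_sum_Ico
        (fun t => (2:ℝ) ^ (-((t % r : ℕ) : ℤ) - 1)) (le_of_lt hrL)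
      have h1 : (∑ t ∈ Finset.range r, (2:ℝ) ^ (-((t % r : ℕ) : ℤ) - 1))
          = 1 - 2 ^ (-(r:ℤ)) := by
        rw [← geom_sum_partial r]
        apply Finset.sum_congr rfl
        intro t ht
        rw [Nat.mod_eq_of_lt (Finset.mem_range.mp ht)]
      have h2 : (∑ t ∈ Finset.Ico r L, (2:ℝ) ^ (-((t % r : ℕ) : ℤ) - 1))
          = ∑ t ∈ Finset.range (L - r), (2:ℝ) ^ (-((t % r : ℕ) : ℤ) - 1) := by
        rw [Finset.sum_Ico_eq_sum_range]
        apply Finset.sum_congr rfl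
        intro t _
        rw [Nat.add_mod_left]
      have h3 := ih (L - r) (by omega)
      have hceil : (L + r - 1) / r = (L - r + r - 1) / r + 1 := by
        have e1 : L + r - 1 = (L - r + r - 1) + r := by omega
        rw [e1, Nat.add_div_right _ hr]
      have hpos : (0:ℝ) ≤ 1 - 2 ^ (-(r:ℤ)) := by linarith [two_zpow_le_one (k := r)]
      rw [← hsplit, h1, h2, hceil]
      have hc : ((((L - r + r - 1) / r + 1 : ℕ)) : ℝ)
          = (((L - r + r - 1) / r : ℕ) : ℝ) + 1 := by push_cast; ring
      rw [hc]
      nlinarith [h3]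

lemma card_ge (n k : ℕ) (hk : k ≤ n) :
    ((Finset.univ.filter (fun i : Fin n => k ≤ i.val)).card) = n - k := by
  have : (Finset.univ.filter (fun i : Fin n => k ≤ i.val))
      = Finset.map ⟨fun j : Fin (n - k) => (⟨k + j.1, by omega⟩ : Fin n),
          fun a b hab => by
            simp only [Fin.mk.injEq] at hab
            exact Fin.ext (by omega)⟩ Finset.univ := by
    ext i
    simp only [Finset.mem_filter, Finset.mem_univ, true_and, Finset.mem_map,
      Function.Embedding.coeFn_mk]
    constructor
    · intro hi
      exact ⟨⟨i.val - k, by omega⟩, Fin.ext (by show k + (i.val - k) = i.val; omega)⟩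
    · rintro ⟨j, rfl⟩
      show k ≤ k + j.val; omega
  rw [this, Finset.card_map, Finset.card_univ, Fintype.card_fin]


section BlockMain

variable (w r : ℕ) (S : Finset (Fin (w * r) × Fin (w * r)))

def extM (f : S → ZMod 2) : Matrix (Fin (w * r)) (Fin (w * r)) (ZMod 2) :=
  Matrix.of fun i j => if h : (i, j) ∈ S then f ⟨(i, j), h⟩ else 0

def fail (f : S → ZMod 2) (s : Fin (w * r)) : Prop :=
  (extM w r S f)ᵀ s ∈ Submodule.span (ZMod 2) ((extM w r S f)ᵀ '' {u | s < u})

noncomputable def failcount (f : S → ZMod 2) : ℕ :=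
  (Finset.univ.filter (fun s => fail w r S f s)).card

lemma rank_add_failcount (f : S → ZMod 2) :
    (extM w r S f).rank + failcount w r S f = w * r := by
  have h := span_count_aux' (K := ZMod 2) (extM w r S f)ᵀ (w * r) 0 (by omega) (by omega)
  have h1 : {s : Fin (w * r) | 0 ≤ s.val} = Set.univ := by
    ext s; simp
  have h2 : (Finset.univ.filter
        (fun s : Fin (w * r) => 0 ≤ s.val ∧ (extM w r S f)ᵀ s ∈
          Submodule.span (ZMod 2) ((extM w r S f)ᵀ '' {u | s < u})))
      = (Finset.univ.filter (fun s => fail w r S f s)) := by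
    apply Finset.filter_congr
    intro s _
    simp [fail]
  rw [h1, h2] at h
  have hcol : (extM w r S f)ᵀ '' Set.univ = Set.range (extM w r S f).col := by
    exact Set.image_univ
  rw [hcol] at h
  rw [Matrix.rank_eq_finrank_span_cols, failcount]
  omega

variable (t : Fin (w * r))

def xpart (f : S → ZMod 2) (q : {q : S // (q : Fin (w * r) × Fin (w * r)).2 = t}) :
    ZMod 2 := f q.1

def gpart (f : S → ZMod 2) (q : {q : S // (q : Fin (w * r) × Fin (w * r)).2 ≠ t}) :
    ZMod 2 := f q.1

def extG (g : {q : S // (q : Fin (w * r) × Fin (w * r)).2 ≠ t} → ZMod 2) :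
    Matrix (Fin (w * r)) (Fin (w * r)) (ZMod 2) :=
  Matrix.of fun i j => if h : ((i, j) ∈ S ∧ j ≠ t) then g ⟨⟨(i, j), h.1⟩, h.2⟩ else 0

noncomputable def colL :
    ({q : S // (q : Fin (w * r) × Fin (w * r)).2 = t} → ZMod 2) →ₗ[ZMod 2]
      (Fin (w * r) → ZMod 2) where
  toFun x i := if h : (i, t) ∈ S then x ⟨⟨(i, t), h⟩, rfl⟩ else 0
  map_add' x y := by funext i; by_cases h : (i, t) ∈ S <;> simp [h]
  map_smul' c x := by funext i; by_cases h : (i, t) ∈ S <;> simp [h]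

def Usub (g : {q : S // (q : Fin (w * r) × Fin (w * r)).2 ≠ t} → ZMod 2) :
    Submodule (ZMod 2) (Fin (w * r) → ZMod 2) :=
  Submodule.span (ZMod 2) ((extG w r S t g)ᵀ '' {u | t < u})

noncomputable def failabove (f : S → ZMod 2) : ℕ :=
  (Finset.univ.filter (fun s => t < s ∧ fail w r S f s)).card

noncomputable def failaboveG (g : {q : S // (q : Fin (w * r) × Fin (w * r)).2 ≠ t} → ZMod 2) :
    ℕ :=
  (Finset.univ.filter (fun s => t < s ∧ (extG w r S t g)ᵀ s ∈
    Submodule.span (ZMod 2) ((extG w r S t g)ᵀ '' {u | s < u}))).card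

lemma col_eq_g (f : S → ZMod 2) (j : Fin (w * r)) (hj : j ≠ t) :
    (extM w r S f)ᵀ j = (extG w r S t (gpart w r S t f))ᵀ j := by
  funext i
  show extM w r S f i j = extG w r S t (gpart w r S t f) i j
  by_cases h : (i, j) ∈ S
  · simp [extM, extG, h, hj, gpart]
  · simp [extM, extG, h]

lemma col_t_eq (f : S → ZMod 2) :
    (extM w r S f)ᵀ t = colL w r S t (xpart w r S t f) := by
  funext i
  show extM w r S f i t = _
  by_cases h : (i, t) ∈ S
  · simp [extM, colL, h, xpart]
  · simp [extM, colL, h]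

lemma fail_transfer (f : S → ZMod 2) (s : Fin (w * r)) (hs : t < s) :
    fail w r S f s ↔ (extG w r S t (gpart w r S t f))ᵀ s ∈
      Submodule.span (ZMod 2) ((extG w r S t (gpart w r S t f))ᵀ '' {u | s < u}) := by
  unfold fail
  rw [col_eq_g w r S t f s (ne_of_gt hs)]
  have himg : (extM w r S f)ᵀ '' {u | s < u}
      = (extG w r S t (gpart w r S t f))ᵀ '' {u | s < u} :=
    Set.image_congr (fun u hu => col_eq_g w r S t f u (ne_of_gt (lt_trans hs hu)))
  rw [himg]

lemma failabove_transfer (f : S → ZMod 2) :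
    failabove w r S t f = failaboveG w r S t (gpart w r S t f) := by
  unfold failabove failaboveG
  congr 1
  apply Finset.filter_congr
  intro s _
  constructor
  · rintro ⟨h1, h2⟩; exact ⟨h1, (fail_transfer w r S t f s h1).mp h2⟩
  · rintro ⟨h1, h2⟩; exact ⟨h1, (fail_transfer w r S t f s h1).mpr h2⟩

lemma fail_t_iff (f : S → ZMod 2) :
    fail w r S f t ↔ colL w r S t (xpart w r S t f) ∈ Usub w r S t (gpart w r S t f) := by
  unfold fail Usub
  have himg : (extM w r S f)ᵀ '' {u | t < u}
      = (extG w r S t (gpart w r S t f))ᵀ '' {u | t < u} :=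
    Set.image_congr (fun u hu => col_eq_g w r S t f u (ne_of_gt hu))
  rw [himg, col_t_eq]

lemma colL_injective : Function.Injective (colL w r S t) := by
  intro x y hxy
  funext q
  obtain ⟨⟨⟨i, j⟩, hq⟩, hjt⟩ := q
  have hjt' : j = t := hjt
  subst hjt'
  have := congrFun hxy i
  simpa [colL, hq] using this

lemma Usub_le_range (hS : ∀ p : Fin (w * r) × Fin (w * r), p ∈ S ↔ p.2.val / r ≤ p.1.val / r)
    (g : {q : S // (q : Fin (w * r) × Fin (w * r)).2 ≠ t} → ZMod 2) :
    Usub w r S t g ≤ LinearMap.range (colL w r S t) := by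
  rw [Usub, Submodule.span_le]
  rintro - ⟨j, hj, rfl⟩
  refine ⟨fun q => extG w r S t g q.1.1.1 j, ?_⟩
  funext i
  show (if h : (i, t) ∈ S then extG w r S t g i j else 0) = extG w r S t g i j
  by_cases h : (i, t) ∈ S
  · simp [h]
  · simp only [h, dif_neg, not_false_iff]
    have hit : ¬ (t.val / r ≤ i.val / r) := fun hc => h ((hS (i, t)).mpr hc)
    have hij : ¬ ((i, j) ∈ S) := by
      intro hc
      have h1 : j.val / r ≤ i.val / r := (hS (i, j)).mp hc
      have h2 : t.val ≤ j.val := le_of_lt hj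
      exact hit (le_trans (Nat.div_le_div_right h2) h1)
    symm
    simp [extG, hij]

lemma finrank_Usub (g : {q : S // (q : Fin (w * r) × Fin (w * r)).2 ≠ t} → ZMod 2) :
    Module.finrank (ZMod 2) (Usub w r S t g) + failaboveG w r S t g
      = w * r - (t.val + 1) := by
  have h := span_count_aux' (K := ZMod 2) (extG w r S t g)ᵀ
    (w * r - (t.val + 1)) (t.val + 1) rfl (by have := t.isLt; omega)
  have h1 : {s : Fin (w * r) | t.val + 1 ≤ s.val} = {u : Fin (w * r) | t < u} := by
    ext u
    simp only [Set.mem_setOf_eq, Fin.lt_def]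
    omega
  have h2 : (Finset.univ.filter
        (fun s : Fin (w * r) => t.val + 1 ≤ s.val ∧ (extG w r S t g)ᵀ s ∈
          Submodule.span (ZMod 2) ((extG w r S t g)ᵀ '' {u | s < u})))
      = (Finset.univ.filter (fun s => t < s ∧ (extG w r S t g)ᵀ s ∈
          Submodule.span (ZMod 2) ((extG w r S t g)ᵀ '' {u | s < u}))) := by
    apply Finset.filter_congr
    intro s _
    constructor
    · rintro ⟨ha, hb⟩; exact ⟨by rw [Fin.lt_def]; omega, hb⟩
    · rintro ⟨ha, hb⟩; rw [Fin.lt_def] at ha; exact ⟨by omega, hb⟩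
  rw [h1, h2] at h
  exact h

lemma card_colL_fiber (g : {q : S // (q : Fin (w * r) × Fin (w * r)).2 ≠ t} → ZMod 2)
    (hrange : Usub w r S t g ≤ LinearMap.range (colL w r S t)) :
    (Finset.univ.filter (fun x : {q : S // (q : Fin (w * r) × Fin (w * r)).2 = t} → ZMod 2
        => colL w r S t x ∈ Usub w r S t g)).card
      = 2 ^ (Module.finrank (ZMod 2) (Usub w r S t g)) := by
  classical
  have e : {x : {q : S // (q : Fin (w * r) × Fin (w * r)).2 = t} → ZMod 2 //
      colL w r S t x ∈ Usub w r S t g} ≃ (Usub w r S t g) := by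
    refine Equiv.ofBijective (fun x => ⟨colL w r S t x.1, x.2⟩) ⟨?_, ?_⟩
    · intro a b hab
      exact Subtype.ext (colL_injective w r S t (by simpa using congrArg Subtype.val hab))
    · rintro ⟨u, hu⟩
      obtain ⟨x, hx⟩ := hrange hu
      exact ⟨⟨x, by rw [hx]; exact hu⟩, Subtype.ext hx⟩
  rw [← Fintype.card_subtype, Fintype.card_congr e]
  rw [Module.card_eq_pow_finrank (K := ZMod 2) (V := Usub w r S t g), ZMod.card]

lemma parts_ext (f f' : S → ZMod 2) (hx : xpart w r S t f = xpart w r S t f')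
    (hg : gpart w r S t f = gpart w r S t f') : f = f' := by
  funext q
  by_cases h : (q : Fin (w * r) × Fin (w * r)).2 = t
  · exact congrFun hx ⟨q, h⟩
  · exact congrFun hg ⟨q, h⟩

noncomputable def recomb (x : {q : S // (q : Fin (w * r) × Fin (w * r)).2 = t} → ZMod 2)
    (g : {q : S // (q : Fin (w * r) × Fin (w * r)).2 ≠ t} → ZMod 2) : S → ZMod 2 :=
  fun q => if h : (q : Fin (w * r) × Fin (w * r)).2 = t then x ⟨q, h⟩ else g ⟨q, h⟩

lemma xpart_recomb (x : {q : S // (q : Fin (w * r) × Fin (w * r)).2 = t} → ZMod 2)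
    (g : {q : S // (q : Fin (w * r) × Fin (w * r)).2 ≠ t} → ZMod 2) :
    xpart w r S t (recomb w r S t x g) = x := by
  funext q
  show recomb w r S t x g q.1 = x q
  unfold recomb
  rw [dif_pos q.2]

lemma gpart_recomb (x : {q : S // (q : Fin (w * r) × Fin (w * r)).2 = t} → ZMod 2)
    (g : {q : S // (q : Fin (w * r) × Fin (w * r)).2 ≠ t} → ZMod 2) :
    gpart w r S t (recomb w r S t x g) = g := by
  funext q
  show recomb w r S t x g q.1 = g q
  unfold recomb
  rw [dif_neg q.2]

lemma card_fiber (hS : ∀ p : Fin (w * r) × Fin (w * r), p ∈ S ↔ p.2.val / r ≤ p.1.val / r)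
    (γ : ℕ) (g : {q : S // (q : Fin (w * r) × Fin (w * r)).2 ≠ t} → ZMod 2) :
    ((Finset.univ.filter
        (fun f : S → ZMod 2 => fail w r S f t ∧ failabove w r S t f = γ)).filter
      (fun f => gpart w r S t f = g)).card ≤ 2 ^ (w * r - (t.val + 1) - γ) := by
  by_cases hne : ((Finset.univ.filter
        (fun f : S → ZMod 2 => fail w r S f t ∧ failabove w r S t f = γ)).filter
      (fun f => gpart w r S t f = g)).Nonempty
  · obtain ⟨f₀, hf₀⟩ := hne
    rw [Finset.mem_filter, Finset.mem_filter] at hf₀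
    obtain ⟨⟨-, hfail0, hfa0⟩, hg0⟩ := hf₀
    have hGγ : failaboveG w r S t g = γ := by
      rw [← hg0, ← failabove_transfer]; exact hfa0
    have hcard : ((Finset.univ.filter
          (fun f : S → ZMod 2 => fail w r S f t ∧ failabove w r S t f = γ)).filter
        (fun f => gpart w r S t f = g)).card
        = (Finset.univ.filter
            (fun x : {q : S // (q : Fin (w * r) × Fin (w * r)).2 = t} → ZMod 2
              => colL w r S t x ∈ Usub w r S t g)).card := by
      apply Finset.card_bij (fun f _ => xpart w r S t f)
      · intro f hf
        rw [Finset.mem_filter, Finset.mem_filter] at hf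
        obtain ⟨⟨-, hfail, -⟩, hg⟩ := hf
        rw [Finset.mem_filter]
        refine ⟨Finset.mem_univ _, ?_⟩
        rw [← hg]
        exact (fail_t_iff w r S t f).mp hfail
      · intro f hf f' hf' hxx
        rw [Finset.mem_filter, Finset.mem_filter] at hf hf'
        exact parts_ext w r S t f f' hxx (hf.2.trans hf'.2.symm)
      · intro x hx
        rw [Finset.mem_filter] at hx
        refine ⟨recomb w r S t x g, ?_, (xpart_recomb w r S t x g)⟩
        rw [Finset.mem_filter, Finset.mem_filter]
        refine ⟨⟨Finset.mem_univ _, ?_, ?_⟩, gpart_recomb w r S t x g⟩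
        · rw [fail_t_iff, xpart_recomb, gpart_recomb]
          exact hx.2
        · rw [failabove_transfer, gpart_recomb]
          exact hGγ
    rw [hcard, card_colL_fiber w r S t g (Usub_le_range w r S t hS g)]
    apply Nat.pow_le_pow_right (by norm_num)
    have := finrank_Usub w r S t g
    omega
  · rw [Finset.not_nonempty_iff_eq_empty] at hne
    rw [hne]
    simp
lemma card_xT (hr : 0 < r)
    (hS : ∀ p : Fin (w * r) × Fin (w * r), p ∈ S ↔ p.2.val / r ≤ p.1.val / r) :
    Fintype.card {q : S // (q : Fin (w * r) × Fin (w * r)).2 = t}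
      = w * r - r * (t.val / r) := by
  have e1 : {q : S // (q : Fin (w * r) × Fin (w * r)).2 = t}
      ≃ {i : Fin (w * r) // (i, t) ∈ S} := by
    refine ⟨fun q => ⟨(q.1 : Fin (w * r) × Fin (w * r)).1, ?_⟩,
      fun i => ⟨⟨(i.1, t), i.2⟩, rfl⟩, ?_, ?_⟩
    · obtain ⟨⟨⟨i, j⟩, hq⟩, hj⟩ := q
      have hj' : j = t := hj
      subst hj'
      exact hq
    · rintro ⟨⟨⟨i, j⟩, hq⟩, hj⟩
      have hj' : j = t := hj
      subst hj'
      rfl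
    · rintro ⟨i, hi⟩
      rfl
  rw [Fintype.card_congr e1]
  have e2 : {i : Fin (w * r) // (i, t) ∈ S} ≃ {i : Fin (w * r) // r * (t.val / r) ≤ i.val} := by
    apply Equiv.subtypeEquivRight
    intro i
    rw [hS (i, t)]
    show t.val / r ≤ i.val / r ↔ _
    constructor
    · intro h
      calc r * (t.val / r) ≤ r * (i.val / r) := Nat.mul_le_mul_left r h
        _ ≤ i.val := by rw [mul_comm]; exact Nat.div_mul_le_self _ _
    · intro h
      apply (Nat.le_div_iff_mul_le hr).mpr
      calc t.val / r * r = r * (t.val / r) := mul_comm _ _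
        _ ≤ i.val := h
  rw [Fintype.card_congr e2, Fintype.card_subtype]
  apply card_ge
  calc r * (t.val / r) ≤ t.val := by rw [mul_comm]; exact Nat.div_mul_le_self _ _
    _ ≤ w * r := le_of_lt t.isLt

lemma card_F_factor :
    Fintype.card (S → ZMod 2)
      = Fintype.card ({q : S // (q : Fin (w * r) × Fin (w * r)).2 = t} → ZMod 2)
        * Fintype.card ({q : S // (q : Fin (w * r) × Fin (w * r)).2 ≠ t} → ZMod 2) := by
  rw [← Fintype.card_prod]
  exact Fintype.card_congr
    (Equiv.piEquivPiSubtypeProd (fun q : S => (q : Fin (w * r) × Fin (w * r)).2 = t)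
      (fun _ => ZMod 2))

lemma card_fun_eq_pow (α : Type*) [Fintype α] [DecidableEq α] :
    Fintype.card (α → ZMod 2) = 2 ^ Fintype.card α := by
  rw [Fintype.card_fun]
  norm_num

lemma card_At (hr : 0 < r)
    (hS : ∀ p : Fin (w * r) × Fin (w * r), p ∈ S ↔ p.2.val / r ≤ p.1.val / r) (γ : ℕ) :
    (Finset.univ.filter
        (fun f : S → ZMod 2 => fail w r S f t ∧ failabove w r S t f = γ)).card
        * 2 ^ (w * r - r * (t.val / r))
      ≤ Fintype.card (S → ZMod 2) * 2 ^ (w * r - (t.val + 1) - γ) := by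
  have h1 : (Finset.univ.filter
        (fun f : S → ZMod 2 => fail w r S f t ∧ failabove w r S t f = γ)).card
      ≤ Fintype.card ({q : S // (q : Fin (w * r) × Fin (w * r)).2 ≠ t} → ZMod 2)
          * 2 ^ (w * r - (t.val + 1) - γ) := by
    rw [Finset.card_eq_sum_card_fiberwise
      (f := gpart w r S t)
      (fun f _ => Finset.mem_univ _)]
    calc _ ≤ ∑ _g : ({q : S // (q : Fin (w * r) × Fin (w * r)).2 ≠ t} → ZMod 2),
          2 ^ (w * r - (t.val + 1) - γ) :=
        Finset.sum_le_sum (fun g _ => card_fiber w r S t hS γ g)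
      _ = _ := by rw [Finset.sum_const, Finset.card_univ, smul_eq_mul]
  calc (Finset.univ.filter
        (fun f : S → ZMod 2 => fail w r S f t ∧ failabove w r S t f = γ)).card
        * 2 ^ (w * r - r * (t.val / r))
      ≤ (Fintype.card ({q : S // (q : Fin (w * r) × Fin (w * r)).2 ≠ t} → ZMod 2)
          * 2 ^ (w * r - (t.val + 1) - γ)) * 2 ^ (w * r - r * (t.val / r)) :=
        Nat.mul_le_mul_right _ h1
    _ = Fintype.card (S → ZMod 2) * 2 ^ (w * r - (t.val + 1) - γ) := by
        rw [card_F_factor w r S t, card_fun_eq_pow, card_fun_eq_pow, card_xT w r S t hr hS]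
        ring

lemma exists_t_of_lowrank (hw : 0 < w) (hr : 0 < r) (γ : ℕ) (hγ : γ ≤ w * r - 1)
    (f : S → ZMod 2) (hrank : (extM w r S f).rank < w * r - γ) :
    ∃ t : Fin (w * r), t.val < w * r - γ ∧ fail w r S f t ∧ failabove w r S t f = γ := by
  have hn : 0 < w * r := Nat.mul_pos hw hr
  have hfc : γ < failcount w r S f := by
    have := rank_add_failcount w r S f
    omega
  obtain ⟨t, ht, hcard⟩ := exists_nth_from_top γ (Finset.univ.filter (fail w r S f)) hfc
  have htf : fail w r S f t := (Finset.mem_filter.mp ht).2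
  have hfa : failabove w r S t f = γ := by
    rw [failabove, ← hcard, Finset.filter_filter]
    congr 1
    ext s
    simp only [Finset.mem_filter, Finset.mem_univ, true_and]
    tauto
  refine ⟨t, ?_, htf, hfa⟩
  have hsub : (Finset.univ.filter (fun s => t < s ∧ fail w r S f s))
      ⊆ (Finset.univ.filter (fun s : Fin (w * r) => t.val + 1 ≤ s.val)) := by
    apply Finset.monotone_filter_right
    rintro s - ⟨h1, -⟩
    rw [Fin.lt_def] at h1
    omega
  have hle := Finset.card_le_card hsub
  rw [card_ge _ _ (by have := t.isLt; omega)] at hle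
  rw [failabove] at hfa
  have := t.isLt
  omega

lemma main_count (hw : 0 < w) (hr : 0 < r)
    (hS : ∀ p : Fin (w * r) × Fin (w * r), p ∈ S ↔ p.2.val / r ≤ p.1.val / r)
    (γ : ℕ) (hγ : γ ≤ w * r - 1) :
    ((Finset.univ.filter (fun f : S → ZMod 2 => (extM w r S f).rank < w * r - γ)).card : ℝ)
      ≤ (Fintype.card (S → ZMod 2) : ℝ)
        * ((((w * r - γ + r - 1) / r : ℕ) : ℝ) * (1 - 2 ^ (-(r:ℤ))) * 2 ^ (-(γ:ℤ))) := by
  have hn : 0 < w * r := Nat.mul_pos hw hr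
  have hsub : (Finset.univ.filter (fun f : S → ZMod 2 => (extM w r S f).rank < w * r - γ))
      ⊆ (Finset.univ.filter (fun t : Fin (w * r) => t.val < w * r - γ)).biUnion
          (fun t => Finset.univ.filter
            (fun f : S → ZMod 2 => fail w r S f t ∧ failabove w r S t f = γ)) := by
    intro f hf
    rw [Finset.mem_filter] at hf
    obtain ⟨t, ht1, ht2, ht3⟩ := exists_t_of_lowrank w r S hw hr γ hγ f hf.2
    apply Finset.mem_biUnion.mpr
    exact ⟨t, by simp [ht1], by simp [ht2, ht3]⟩
  have hcard := le_trans (Finset.card_le_card hsub) Finset.card_biUnion_le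
  have hreal : ∀ t : Fin (w * r), t.val < w * r - γ →
      ((Finset.univ.filter
        (fun f : S → ZMod 2 => fail w r S f t ∧ failabove w r S t f = γ)).card : ℝ)
      ≤ (Fintype.card (S → ZMod 2) : ℝ) * 2 ^ (-(γ:ℤ))
          * 2 ^ (-((t.val % r : ℕ) : ℤ) - 1) := by
    intro t ht
    have hnat := card_At w r S t hr hS γ
    have hcast : ((Finset.univ.filter
          (fun f : S → ZMod 2 => fail w r S f t ∧ failabove w r S t f = γ)).card : ℝ)
          * (2:ℝ) ^ (((w * r - r * (t.val / r) : ℕ) : ℤ))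
        ≤ (Fintype.card (S → ZMod 2) : ℝ)
          * (2:ℝ) ^ (((w * r - (t.val + 1) - γ : ℕ) : ℤ)) := by
      rw [zpow_natCast, zpow_natCast]
      exact_mod_cast hnat
    have h2a : (0:ℝ) < 2 ^ (((w * r - r * (t.val / r) : ℕ) : ℤ)) := by positivity
    have hdm := Nat.div_add_mod t.val r
    have htlt := t.isLt
    have hexp : ((w * r - (t.val + 1) - γ : ℕ) : ℤ) - ((w * r - r * (t.val / r) : ℕ) : ℤ)
        = (-(γ:ℤ)) + (-((t.val % r : ℕ) : ℤ) - 1) := by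
      have hx : r * (t.val / r) ≤ t.val := by omega
      omega
    calc ((Finset.univ.filter
          (fun f : S → ZMod 2 => fail w r S f t ∧ failabove w r S t f = γ)).card : ℝ)
        ≤ (Fintype.card (S → ZMod 2) : ℝ)
            * (2:ℝ) ^ (((w * r - (t.val + 1) - γ : ℕ) : ℤ))
            / 2 ^ (((w * r - r * (t.val / r) : ℕ) : ℤ)) := (le_div_iff₀ h2a).mpr hcast
      _ = (Fintype.card (S → ZMod 2) : ℝ)
            * (2:ℝ) ^ (((w * r - (t.val + 1) - γ : ℕ) : ℤ)
              - ((w * r - r * (t.val / r) : ℕ) : ℤ)) := by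
          rw [zpow_sub₀ (by norm_num : (2:ℝ) ≠ 0)]
          ring
      _ = (Fintype.card (S → ZMod 2) : ℝ) * 2 ^ (-(γ:ℤ))
            * 2 ^ (-((t.val % r : ℕ) : ℤ) - 1) := by
          rw [hexp, zpow_add₀ (by norm_num : (2:ℝ) ≠ 0)]
          ring
  have hsum : (∑ t ∈ Finset.univ.filter (fun t : Fin (w * r) => t.val < w * r - γ),
        (2:ℝ) ^ (-((t.val % r : ℕ) : ℤ) - 1))
      = ∑ u ∈ Finset.range (w * r - γ), (2:ℝ) ^ (-((u % r : ℕ) : ℤ) - 1) := by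
    rw [Finset.sum_filter]
    rw [Fin.sum_univ_eq_sum_range
      (fun u => if u < w * r - γ then (2:ℝ) ^ (-((u % r : ℕ) : ℤ) - 1) else 0)]
    rw [← Finset.sum_filter]
    congr 1
    ext u
    simp only [Finset.mem_filter, Finset.mem_range]
    omega
  have hgeom := geom_block_sum hr (w * r - γ)
  have hFpos : (0:ℝ) ≤ (Fintype.card (S → ZMod 2) : ℝ) * 2 ^ (-(γ:ℤ)) := by positivity
  calc ((Finset.univ.filter
        (fun f : S → ZMod 2 => (extM w r S f).rank < w * r - γ)).card : ℝ)
      ≤ ∑ t ∈ Finset.univ.filter (fun t : Fin (w * r) => t.val < w * r - γ),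
          ((Finset.univ.filter
            (fun f : S → ZMod 2 => fail w r S f t ∧ failabove w r S t f = γ)).card : ℝ) := by
        exact_mod_cast hcard
    _ ≤ ∑ t ∈ Finset.univ.filter (fun t : Fin (w * r) => t.val < w * r - γ),
          (Fintype.card (S → ZMod 2) : ℝ) * 2 ^ (-(γ:ℤ))
            * 2 ^ (-((t.val % r : ℕ) : ℤ) - 1) :=
        Finset.sum_le_sum (fun t ht => hreal t (by simpa using ht))
    _ = (Fintype.card (S → ZMod 2) : ℝ) * 2 ^ (-(γ:ℤ))
          * ∑ t ∈ Finset.univ.filter (fun t : Fin (w * r) => t.val < w * r - γ),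
            (2:ℝ) ^ (-((t.val % r : ℕ) : ℤ) - 1) := by
        rw [Finset.mul_sum]
    _ = (Fintype.card (S → ZMod 2) : ℝ) * 2 ^ (-(γ:ℤ))
          * ∑ u ∈ Finset.range (w * r - γ), (2:ℝ) ^ (-((u % r : ℕ) : ℤ) - 1) := by
        rw [hsum]
    _ ≤ (Fintype.card (S → ZMod 2) : ℝ) * 2 ^ (-(γ:ℤ))
          * ((((w * r - γ + r - 1) / r : ℕ) : ℝ) * (1 - 2 ^ (-(r:ℤ)))) :=
        mul_le_mul_of_nonneg_left hgeom hFpos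
    _ = (Fintype.card (S → ZMod 2) : ℝ)
        * ((((w * r - γ + r - 1) / r : ℕ) : ℝ) * (1 - 2 ^ (-(r:ℤ))) * 2 ^ (-(γ:ℤ))) := by
        ring

end BlockMain

lemma all_measurable {α : Type*} [Fintype α] (A : Set (α → ZMod 2)) : MeasurableSet A := by
  classical
  have hsing : ∀ f : α → ZMod 2, MeasurableSet ({f} : Set (α → ZMod 2)) := by
    intro f
    have h : ({f} : Set (α → ZMod 2)) = ⋂ q, (fun g : α → ZMod 2 => g q) ⁻¹' {f q} := by
      ext g
      simp [Set.mem_iInter, funext_iff]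
    rw [h]
    exact MeasurableSet.iInter (fun q => measurable_pi_apply q trivial)
  rw [← Set.biUnion_of_singleton A]
  exact Set.Finite.measurableSet_biUnion (Set.toFinite A) (fun f _ => hsing f)

/-- Lemma SquareT: T is an n×n block lower-triangular matrix over F₂
(n = wr, blocks of size r×r); the block of entry (i,j) is (i/r, j/r). Blocks on or
below the block diagonal (j/r ≤ i/r) are jointly i.i.d. uniform; blocks strictly
above are zero. Then for 0 ≤ γ ≤ n−1,
Pr[rank(T) < n−γ] ≤ ⌈(n−γ)/r⌉·(1−2^{−r})·2^{−γ}, where ⌈a/r⌉ = (a+r−1)/r. -/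
theorem rank_lower_tail_block_triangular {Ω : Type} [MeasurableSpace Ω]
    (μ : Measure Ω) [IsProbabilityMeasure μ]
    (w r : ℕ) (hw : 0 < w) (hr : 0 < r)
    (T : Ω → Fin (w * r) → Fin (w * r) → ZMod 2)
    (S : Finset (Fin (w * r) × Fin (w * r)))
    (hS : ∀ p : Fin (w * r) × Fin (w * r), p ∈ S ↔ p.2.val / r ≤ p.1.val / r)
    (hunif : μ.map (fun ω (p : S) => T ω p.1.1 p.1.2)
      = (PMF.uniformOfFintype (S → ZMod 2)).toMeasure)
    (hzero : ∀ ω i j, (i, j) ∉ S → T ω i j = 0)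
    (γ : ℕ) (hγ : γ ≤ w * r - 1) :
    (μ {ω | (Matrix.of (T ω)).rank < w * r - γ}).toReal
      ≤ (((w * r - γ + r - 1) / r : ℕ) : ℝ) * (1 - 2 ^ (-(r : ℤ))) * 2 ^ (-(γ : ℤ)) := by
  classical
  set ρ : Ω → (S → ZMod 2) := fun ω p => T ω p.1.1 p.1.2 with hρ
  have hAE : AEMeasurable ρ μ := by
    by_contra h
    rw [Measure.map_of_not_aemeasurable h] at hunif
    have h1 := congrArg (fun m : Measure (S → ZMod 2) => m Set.univ) hunif
    simp only [Measure.coe_zero, Pi.zero_apply] at h1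
    have h2 : (PMF.uniformOfFintype (S → ZMod 2)).toMeasure Set.univ = 1 :=
      measure_univ
    rw [h2] at h1
    exact one_ne_zero h1.symm
  have hTω : ∀ ω, Matrix.of (T ω) = extM w r S (ρ ω) := by
    intro ω
    ext i j
    show T ω i j = _
    by_cases h : (i, j) ∈ S
    · simp [extM, h, hρ]
    · simp [extM, h, hzero ω i j h]
  set A : Set (S → ZMod 2) := {f | (extM w r S f).rank < w * r - γ} with hA
  have hset : {ω | (Matrix.of (T ω)).rank < w * r - γ} = ρ ⁻¹' A := by
    ext ω
    simp only [Set.mem_setOf_eq, Set.mem_preimage, hA, hTω ω]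
  rw [hset, ← Measure.map_apply_of_aemeasurable hAE (all_measurable A), hunif]
  rw [PMF.toMeasure_uniformOfFintype_apply A (all_measurable A)]
  have hcardA : Nat.card ↥A
      = (Finset.univ.filter
          (fun f : S → ZMod 2 => (extM w r S f).rank < w * r - γ)).card := by
    rw [Nat.card_eq_fintype_card, ← Fintype.card_subtype]
    exact Fintype.card_congr (Equiv.subtypeEquivRight (fun f => Iff.rfl))
  rw [Fintype.card_eq_nat_card, hcardA]
  rw [ENNReal.toReal_div]
  simp only [ENNReal.toReal_natCast]
  have hFpos : (0:ℝ) < (Fintype.card (S → ZMod 2) : ℝ) := by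
    have : 0 < Fintype.card (S → ZMod 2) := Fintype.card_pos
    exact_mod_cast this
  rw [div_le_iff₀ hFpos]
  calc ((Finset.univ.filter
        (fun f : S → ZMod 2 => (extM w r S f).rank < w * r - γ)).card : ℝ)
      ≤ (Fintype.card (S → ZMod 2) : ℝ)
        * ((((w * r - γ + r - 1) / r : ℕ) : ℝ) * (1 - 2 ^ (-(r:ℤ))) * 2 ^ (-(γ:ℤ))) :=
      main_count w r S hw hr hS γ hγ
    _ = _ := by ring
end

section
/- Let r ≥ 1, u ≥ 1 be integers and n − γ ≤ ur with u = ⌈(n−γ)/r⌉. Then Σ_{j=1}^{n−γ} 2^{τ(j)·r − j} ≤ u·(1 − 2^{−r}), where τ(j) is the largest integer strictly smaller than j/r. -/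
open Finset

lemma geom_ioc (r : ℕ) : ∑ i ∈ Ioc 0 r, (2:ℝ) ^ (-(i:ℤ)) = 1 - 2 ^ (-(r:ℤ)) := by
  induction r with
  | zero => simp
  | succ r ih =>
      rw [Finset.sum_Ioc_succ_top (Nat.zero_le _), ih]
      have h2 : (2:ℝ) ≠ 0 := by norm_num
      have h : (2:ℝ) ^ (-(r:ℤ)) = 2 ^ (-((r:ℤ)+1)) * 2 := by
        rw [show -((r:ℤ)) = -((r:ℤ)+1)+1 by ring, zpow_add₀ h2, zpow_one]
      push_cast
      rw [h]; ring

lemma block_sum (r u : ℕ) (hr : 1 ≤ r) :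
    ∑ j ∈ Ioc 0 (u * r), (2:ℝ) ^ (((((j - 1) / r) * r : ℕ) : ℤ) - (j : ℤ))
      = (u : ℝ) * (1 - 2 ^ (-(r : ℤ))) := by
  induction u with
  | zero => simp
  | succ u ih =>
      have hsplit : Ioc 0 (u * r) ∪ Ioc (u * r) ((u+1) * r) = Ioc 0 ((u+1)*r) := by
        apply Finset.Ioc_union_Ioc_eq_Ioc (Nat.zero_le _)
        exact Nat.mul_le_mul_right r (Nat.le_succ u)
      have hdisj : Disjoint (Ioc 0 (u * r)) (Ioc (u * r) ((u+1) * r)) := by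
        rw [Finset.disjoint_left]; intro a ha hb
        simp only [Finset.mem_Ioc] at ha hb; omega
      rw [← hsplit, Finset.sum_union hdisj, ih]
      have hlast : ∑ j ∈ Ioc (u * r) ((u+1) * r),
          (2:ℝ) ^ (((((j - 1) / r) * r : ℕ) : ℤ) - (j : ℤ))
          = ∑ i ∈ Ioc 0 r, (2:ℝ) ^ (-(i:ℤ)) := by
        rw [show Ioc (u*r) ((u+1)*r) = (Ioc 0 r).map (addLeftEmbedding (u*r)) from by
          rw [Finset.map_add_left_Ioc]; congr 1 <;> ring, Finset.sum_map]
        apply Finset.sum_congr rfl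
        intro i hi
        simp only [Finset.mem_Ioc] at hi
        simp only [addLeftEmbedding_apply]
        have hdiv : (u * r + i - 1) / r = u := by
          have h1 : u * r + i - 1 = u * r + (i - 1) := by omega
          rw [h1, mul_comm u r, Nat.mul_add_div (by omega)]
          have : (i - 1) / r = 0 := Nat.div_eq_of_lt (by omega)
          omega
        rw [hdiv]
        congr 1
        push_cast
        ring
      rw [hlast, geom_ioc]
      push_cast; ring

/-- Key summation estimate from the proof of Lemma SquareT.
For r ≥ 1, u = ⌈(n−γ)/r⌉ (so n − γ ≤ u·r), and τ(j) = (j−1)/r (the largest integer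
strictly smaller than j/r for j ≥ 1):
Σ_{j=1}^{n−γ} 2^{τ(j)·r − j} ≤ u·(1 − 2^{−r}). -/
theorem sum_two_pow_block_bound (r n γ u : ℕ) (hr : 1 ≤ r) (hγn : γ ≤ n)
    (hu : u = (n - γ + r - 1) / r) (hur : n - γ ≤ u * r) :
    ∑ j ∈ Finset.Icc 1 (n - γ),
        (2 : ℝ) ^ (((((j - 1) / r) * r : ℕ) : ℤ) - (j : ℤ))
      ≤ (u : ℝ) * (1 - 2 ^ (-(r : ℤ))) := by
  rw [← block_sum r u hr, ← Finset.Icc_add_one_left_eq_Ioc]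
  apply Finset.sum_le_sum_of_subset_of_nonneg
  · exact Finset.Icc_subset_Icc_right hur
  · intro j _ _; positivity
end
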